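/- Fix a real number a with 0 < a ≤ 1, and let b, c, d ≥ 0 be reals with b + c + d = 1 - a. If (1-2c-2d)² = (1-2a-2c)² and (1-2a-2c)² = (1-2a-2d)², then either h_a(b,c,d) = π + arccos(4a-1) or h_a(b,c,d) = 3·arccos((4a-1)/3). Moreover, the first case can occur only when a ≤ 1/3. -/
import Mathlib


open Real

/-- `h_a(b,c,d) = arccos(2(a+b)-1) + arccos(2(a+c)-1) + arccos(2(a+d)-1)`. -/
noncomputable def hFun (a b c d : ℝ) : ℝ :=
  Real.arccos (2 * (a + b) - 1) + Real.arccos (2 * (a + c) - 1) +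
    Real.arccos (2 * (a + d) - 1)

/-- At critical points (characterized by the equalities of squares) of
`h_a` on the simplex `{b,c,d ≥ 0, b+c+d = 1-a}`, the value of `h_a` is either
`π + arccos(4a-1)` (a case which can occur only when `a ≤ 1/3`) or `3·arccos((4a-1)/3)`. -/
theorem stmt4 (a b c d : ℝ) (ha0 : 0 < a) (ha1 : a ≤ 1)
    (hb : 0 ≤ b) (hc : 0 ≤ c) (hd : 0 ≤ d) (hsum : b + c + d = 1 - a)
    (h1 : (1 - 2*c - 2*d)^2 = (1 - 2*a - 2*c)^2)
    (h2 : (1 - 2*a - 2*c)^2 = (1 - 2*a - 2*d)^2) :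
    (hFun a b c d = Real.pi + Real.arccos (4 * a - 1) ∧ a ≤ 1/3) ∨
    hFun a b c d = 3 * Real.arccos ((4 * a - 1) / 3) := by
  rcases sq_eq_sq_iff_eq_or_eq_neg.mp h1 with e1 | e1 <;>
    rcases sq_eq_sq_iff_eq_or_eq_neg.mp h2 with e2 | e2
  · -- d = a, c = a, b = 1 - 3a
    left
    refine ⟨?_, by linarith⟩
    unfold hFun
    have p1 : 2 * (a + b) - 1 = -(4 * a - 1) := by linarith
    have p2 : 2 * (a + c) - 1 = 4 * a - 1 := by linarith
    have p3 : 2 * (a + d) - 1 = 4 * a - 1 := by linarith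
    rw [p1, p2, p3, Real.arccos_neg]; ring
  · -- d = a, c = 1 - 3a, b = a
    left
    refine ⟨?_, by linarith⟩
    unfold hFun
    have p1 : 2 * (a + b) - 1 = 4 * a - 1 := by linarith
    have p2 : 2 * (a + c) - 1 = -(4 * a - 1) := by linarith
    have p3 : 2 * (a + d) - 1 = 4 * a - 1 := by linarith
    rw [p1, p2, p3, Real.arccos_neg]; ring
  · -- b = c = d = (1-a)/3
    right
    unfold hFun
    have p1 : 2 * (a + b) - 1 = (4 * a - 1) / 3 := by linarith
    have p2 : 2 * (a + c) - 1 = (4 * a - 1) / 3 := by linarith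
    have p3 : 2 * (a + d) - 1 = (4 * a - 1) / 3 := by linarith
    rw [p1, p2, p3]; ring
  · -- b = a, c = a, d = 1 - 3a
    left
    refine ⟨?_, by linarith⟩
    unfold hFun
    have p1 : 2 * (a + b) - 1 = 4 * a - 1 := by linarith
    have p2 : 2 * (a + c) - 1 = 4 * a - 1 := by linarith
    have p3 : 2 * (a + d) - 1 = -(4 * a - 1) := by linarith
    rw [p1, p2, p3, Real.arccos_neg]; ring
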